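/- Let a and b be coprime positive integers, k ≥ 1, and m ≥ 0. Then s_k^m(a,b) = ∑_{λ+μ+ν=m} (m!/(λ!·μ!·ν!)) · a^{λ+μ} · b^{λ+ν} · (k-1)^λ · (∑_{j=0}^{b-1} j^μ) · (∑_{j=0}^{a-1} j^ν), where the outer sum ranges over all triples (λ,μ,ν) of nonnegative integers with λ + μ + ν = m. -/

import Mathlib

/-- `repCount a b j` is the number of representations of `j` in the form
`m * a + n * b` with `m, n : ℕ`. -/
noncomputable def repCount (a b j : ℕ) : ℕ :=
  Nat.card {p : ℕ × ℕ // p.1 * a + p.2 * b = j}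

open Finset

private lemma cancel_mod' (a b x x' : ℕ) (hab : Nat.Coprime a b) (hx : x < b) (hx' : x' < b)
    (h : x * a ≡ x' * a [MOD b]) : x = x' :=
  (Nat.ModEq.cancel_right_of_coprime hab.symm h).eq_of_lt_of_lt hx hx'

private lemma coeff_eq' (l p μ ν m : ℕ) (h1 : l + p = m) (h2 : μ + ν = p) :
    m.factorial / (l.factorial * μ.factorial * ν.factorial) = m.choose l * p.choose μ := by
  have hl : l ≤ m := by omega
  have hμ : μ ≤ p := by omega
  have e1 : m.choose l * l.factorial * p.factorial = m.factorial := by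
    have := Nat.choose_mul_factorial_mul_factorial hl
    rwa [show m - l = p by omega] at this
  have e2 : p.choose μ * μ.factorial * ν.factorial = p.factorial := by
    have := Nat.choose_mul_factorial_mul_factorial hμ
    rwa [show p - μ = ν by omega] at this
  have : m.factorial = (m.choose l * p.choose μ) * (l.factorial * μ.factorial * ν.factorial) := by
    rw [← e1, ← e2]; ring
  rw [this, Nat.mul_div_cancel]
  positivity

private lemma expand_pow' (c a b m x y : ℕ) :
    (c * (a * b) + x * a + y * b) ^ m =
      ∑ p ∈ antidiagonal m, ∑ q ∈ antidiagonal p.2,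
        (m.factorial / (p.1.factorial * q.1.factorial * q.2.factorial)) *
          a ^ (p.1 + q.1) * b ^ (p.1 + q.2) * c ^ p.1 * x ^ q.1 * y ^ q.2 := by
  rw [add_assoc, (Commute.all (c * (a * b)) (x * a + y * b)).add_pow']
  refine Finset.sum_congr rfl fun p hp => ?_
  simp only [(Commute.all (x * a) (y * b)).add_pow', smul_eq_mul, Finset.mul_sum]
  refine Finset.sum_congr rfl fun q hq => ?_
  rw [Finset.HasAntidiagonal.mem_antidiagonal] at hp hq
  rw [coeff_eq' p.1 p.2 q.1 q.2 m hp hq]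
  ring

private lemma repCount_formula' (a b x y t : ℕ) (hb : 0 < b) (hab : Nat.Coprime a b)
    (hx : x < b) (hy : y < a) : repCount a b (t * (a * b) + x * a + y * b) = t + 1 := by
  set j := t * (a * b) + x * a + y * b with hj
  have key : ∀ u : Fin (t + 1), ((x + u.1 * b) * a + (y + (t - u.1) * a) * b = j) := by
    intro u
    have hu : u.1 ≤ t := by omega
    have h0 : u.1 * (a * b) + (t - u.1) * (a * b) = t * (a * b) := by
      rw [← add_mul]; congr 1; omega
    calc (x + u.1 * b) * a + (y + (t - u.1) * a) * b
        = (u.1 * (a * b) + (t - u.1) * (a * b)) + x * a + y * b := by ring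
      _ = j := by rw [h0]
  have e : {p : ℕ × ℕ // p.1 * a + p.2 * b = j} ≃ Fin (t + 1) := by
    refine Equiv.symm (Equiv.ofBijective (fun u => ⟨(x + u.1 * b, y + (t - u.1) * a), key u⟩) ⟨?_, ?_⟩)
    · intro u v huv
      have h1 : x + u.1 * b = x + v.1 * b := congrArg (fun p => p.1.1) huv
      have : u.1 * b = v.1 * b := by omega
      exact Fin.ext (Nat.eq_of_mul_eq_mul_right hb this)
    · rintro ⟨⟨p, q⟩, hpq⟩
      simp only at hpq
      have hqb : q * b ≡ 0 [MOD b] := (Nat.modEq_zero_iff_dvd).2 ⟨q, mul_comm _ _⟩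
      have hty : (t * a + y) * b ≡ 0 [MOD b] := (Nat.modEq_zero_iff_dvd).2 ⟨t * a + y, mul_comm _ _⟩
      have hmod : p * a ≡ x * a [MOD b] := by
        have h1 : p * a + q * b = x * a + (t * a + y) * b := by rw [hpq, hj]; ring
        calc p * a ≡ p * a + q * b [MOD b] := by simpa using (Nat.ModEq.refl (p * a)).add hqb.symm
          _ = x * a + (t * a + y) * b := h1
          _ ≡ x * a + 0 [MOD b] := (Nat.ModEq.refl (x * a)).add hty
          _ = x * a := by simp
      have hpx : p % b = x := by
        refine cancel_mod' a b (p % b) x hab (Nat.mod_lt _ hb) hx ?_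
        calc p % b * a ≡ p * a [MOD b] := Nat.ModEq.mul_right a (Nat.mod_modEq p b)
          _ ≡ x * a [MOD b] := hmod
      set u := p / b with hu
      have hp : p = x + u * b := by
        conv_lhs => rw [← Nat.mod_add_div' p b, hpx]
      have hub : u ≤ t := by
        have hpa : p * a ≤ j := by omega
        have h2 : x * a + u * (a * b) ≤ t * (a * b) + x * a + y * b := by
          calc x * a + u * (a * b) = p * a := by rw [hp]; ring
            _ ≤ j := hpa
            _ = _ := hj
        have h3 : u * (a * b) < (t + 1) * (a * b) := by
          have hyb : y * b < a * b := Nat.mul_lt_mul_of_lt_of_le hy le_rfl hb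
          have : u * (a * b) ≤ t * (a * b) + y * b := by omega
          calc u * (a * b) ≤ t * (a * b) + y * b := this
            _ < t * (a * b) + a * b := by omega
            _ = (t + 1) * (a * b) := by ring
        have := Nat.lt_of_mul_lt_mul_right h3
        omega
      have hq : q = y + (t - u) * a := by
        have h1 : (x + u * b) * a + q * b = j := by rw [← hp]; exact hpq
        have h2 : (x + u * b) * a + (y + (t - u) * a) * b = j := key ⟨u, by omega⟩
        have : q * b = (y + (t - u) * a) * b := by omega
        exact Nat.eq_of_mul_eq_mul_right hb this
      exact ⟨⟨u, by omega⟩, by simp [← hp, ← hq]⟩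
  rw [repCount, Nat.card_congr e, Nat.card_eq_fintype_card, Fintype.card_fin]

private lemma set_eq' (a b k : ℕ) (ha : 0 < a) (hb : 0 < b) (hab : Nat.Coprime a b) (hk : 1 ≤ k) :
    {j : ℕ | repCount a b j = k} =
      ↑((Finset.range b ×ˢ Finset.range a).image
        (fun p : ℕ × ℕ => (k - 1) * (a * b) + p.1 * a + p.2 * b)) := by
  ext j
  simp only [Set.mem_setOf_eq, Finset.coe_image, Set.mem_image, Finset.mem_coe,
    Finset.mem_product, Finset.mem_range]
  constructor
  · intro hjk
    have hne : Nat.card {p : ℕ × ℕ // p.1 * a + p.2 * b = j} ≠ 0 := by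
      rw [show Nat.card {p : ℕ × ℕ // p.1 * a + p.2 * b = j} = repCount a b j from rfl, hjk]
      omega
    obtain ⟨⟨⟨p, q⟩, hpq⟩, -⟩ := Nat.card_ne_zero.mp hne
    simp only at hpq
    set x := p % b; set y := q % a
    have hxb : x < b := Nat.mod_lt _ hb
    have hya : y < a := Nat.mod_lt _ ha
    have hjform : j = (p / b + q / a) * (a * b) + x * a + y * b := by
      have hp : p = x + p / b * b := by conv_lhs => rw [← Nat.mod_add_div' p b]
      have hq : q = y + q / a * a := by conv_lhs => rw [← Nat.mod_add_div' q a]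
      calc j = p * a + q * b := hpq.symm
        _ = (x + p / b * b) * a + (y + q / a * a) * b := by rw [← hp, ← hq]
        _ = (p / b + q / a) * (a * b) + x * a + y * b := by ring
    have ht : p / b + q / a + 1 = k := by
      rw [← hjk, hjform, repCount_formula' a b x y _ hb hab hxb hya]
    refine ⟨(x, y), ⟨⟨hxb, hya⟩, ?_⟩⟩
    simp only
    rw [hjform, show k - 1 = p / b + q / a by omega]
  · rintro ⟨⟨x, y⟩, ⟨⟨hxb, hya⟩, rfl⟩⟩
    simp only at hxb hya ⊢
    rw [repCount_formula' a b x y (k - 1) hb hab hxb hya]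
    omega

/-- The `m`-th power sum over `R_k(a,b)` equals
`∑_{λ+μ+ν=m} m!/(λ!μ!ν!) a^(λ+μ) b^(λ+ν) (k-1)^λ (∑_{j<b} j^μ) (∑_{j<a} j^ν)`. -/
theorem power_sum_eq (a b k m : ℕ) (ha : 0 < a) (hb : 0 < b)
    (hab : Nat.Coprime a b) (hk : 1 ≤ k) :
    (∑ᶠ j ∈ {j : ℕ | repCount a b j = k}, j ^ m) =
      ∑ x ∈ Finset.HasAntidiagonal.antidiagonal m, ∑ y ∈ Finset.HasAntidiagonal.antidiagonal x.2,
        Nat.factorial m / (Nat.factorial x.1 * Nat.factorial y.1 * Nat.factorial y.2) *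
          a ^ (x.1 + y.1) * b ^ (x.1 + y.2) * (k - 1) ^ x.1 *
          (∑ j ∈ Finset.range b, j ^ y.1) * (∑ j ∈ Finset.range a, j ^ y.2) := by
  rw [set_eq' a b k ha hb hab hk, finsum_mem_coe_finset]
  rw [Finset.sum_image]
  · have step : ∀ z : ℕ × ℕ, ((k - 1) * (a * b) + z.1 * a + z.2 * b) ^ m =
        ∑ p ∈ antidiagonal m, ∑ q ∈ antidiagonal p.2,
          (m.factorial / (p.1.factorial * q.1.factorial * q.2.factorial)) *
            a ^ (p.1 + q.1) * b ^ (p.1 + q.2) * (k - 1) ^ p.1 * z.1 ^ q.1 * z.2 ^ q.2 :=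
      fun z => expand_pow' (k - 1) a b m z.1 z.2
    simp_rw [step]
    rw [Finset.sum_comm]
    refine Finset.sum_congr rfl fun p _ => ?_
    rw [Finset.sum_comm]
    refine Finset.sum_congr rfl fun q _ => ?_
    rw [Finset.sum_product]
    set C := m.factorial / (p.1.factorial * q.1.factorial * q.2.factorial) *
      a ^ (p.1 + q.1) * b ^ (p.1 + q.2) * (k - 1) ^ p.1 with hC
    rw [mul_assoc, Finset.sum_mul_sum, Finset.mul_sum]
    refine Finset.sum_congr rfl fun x _ => ?_
    rw [Finset.mul_sum]
    exact Finset.sum_congr rfl fun y _ => by ring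
  · intro z hz w hw hzw
    simp only [Finset.mem_coe, Finset.mem_product, Finset.mem_range] at hz hw
    have h1 : z.1 * a + z.2 * b = w.1 * a + w.2 * b := by simp only at hzw; omega
    have hz1 : z.1 = w.1 := by
      refine cancel_mod' a b z.1 w.1 hab hz.1 hw.1 ?_
      have e1 : z.2 * b ≡ 0 [MOD b] := (Nat.modEq_zero_iff_dvd).2 ⟨z.2, mul_comm _ _⟩
      have e2 : w.2 * b ≡ 0 [MOD b] := (Nat.modEq_zero_iff_dvd).2 ⟨w.2, mul_comm _ _⟩
      calc z.1 * a ≡ z.1 * a + z.2 * b [MOD b] := by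
            simpa using (Nat.ModEq.refl (z.1 * a)).add e1.symm
        _ = w.1 * a + w.2 * b := h1
        _ ≡ w.1 * a + 0 [MOD b] := (Nat.ModEq.refl (w.1 * a)).add e2
        _ = w.1 * a := by simp
    have hz2 : z.2 = w.2 := by
      have ha1 : z.1 * a = w.1 * a := by rw [hz1]
      have : z.2 * b = w.2 * b := by omega
      exact Nat.eq_of_mul_eq_mul_right hb this
    exact Prod.ext hz1 hz2
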